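/- Let p, q, u, v ∈ ℂ with p ≠ 0, q ≠ 0 and u ≠ v, and define U = ((1 − v)/p)(pu − qv)/(u − v) and V = ((1 − u)/q)(pu − qv)/(u − v) (the map cH_II). If moreover U ≠ V, then ((1 − V)/p)(pU − qV)/(U − V) = u and ((1 − U)/q)(pU − qV)/(U − V) = v; that is, cH_II is an involution. -/

import Mathlib

/-- The map cH_II is an involution. -/
theorem stmt_10 (p q u v U V : ℂ) (hp : p ≠ 0) (hq : q ≠ 0) (huv : u ≠ v)
    (hU : U = (1 - v) / p * (p * u - q * v) / (u - v))
    (hV : V = (1 - u) / q * (p * u - q * v) / (u - v))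
    (hUV : U ≠ V) :
    (1 - V) / p * (p * U - q * V) / (U - V) = u ∧
    (1 - U) / q * (p * U - q * V) / (U - V) = v := by
  have huv' : u - v ≠ 0 := sub_ne_zero.mpr huv
  have h1 : p * U - q * V = p * u - q * v := by
    rw [hU, hV]; field_simp; ring
  have h2 : U - V = (p * u - q * v) * (q * (1 - v) - p * (1 - u)) / (p * q * (u - v)) := by
    rw [hU, hV]; field_simp
  have h3 : 1 - V = u * (q * (1 - v) - p * (1 - u)) / (q * (u - v)) := by
    rw [hV]; field_simp; ring
  have h4 : 1 - U = v * (q * (1 - v) - p * (1 - u)) / (p * (u - v)) := by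
    rw [hU]; field_simp; ring
  have hA : p * u - q * v ≠ 0 := by
    intro h; exact hUV (by rw [hU, hV, h]; ring)
  have hD : q * (1 - v) - p * (1 - u) ≠ 0 := by
    intro h
    apply sub_ne_zero.mpr hUV
    rw [h2, h, mul_zero, zero_div]
  constructor
  · rw [h1, h2, h3]; field_simp; exact mul_div_cancel_right₀ _ (by intro h; exact hA (by linear_combination h))
  · rw [h1, h2, h4]; field_simp; exact mul_div_cancel_right₀ _ (by intro h; exact hA (by linear_combination h))
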